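/- arXiv:2207.13980 — 7 statements merged into one kernel-verified Lean document; each statement's English description precedes it below -/
import Mathlib

section
/- Let A be an associative algebra, M an A-bimodule, and (T₁, T₂) a compatible O-operator. Define products on M by u ⋆₁ v = T₁(u)·v + u·T₁(v) and u ⋆₂ v = T₂(u)·v + u·T₂(v). Then (M, ⋆₁, ⋆₂) is a compatible associative algebra; in particular ⋆₁ and ⋆₂ are both associative and satisfy (u ⋆₁ v) ⋆₂ w + (u ⋆₂ v) ⋆₁ w = u ⋆₂ (v ⋆₁ w) + u ⋆₁ (v ⋆₂ w). -/
open MulOpposite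

def IsOOperator {k A M : Type*} [CommRing k] [Ring A] [Algebra k A]
    [AddCommGroup M] [Module k M] [Module A M] [Module Aᵐᵒᵖ M]
    (T : M →ₗ[k] A) : Prop :=
  ∀ u v : M, T u * T v = T (T u • v + op (T v) • u)

def OOperatorCompat {k A M : Type*} [CommRing k] [Ring A] [Algebra k A]
    [AddCommGroup M] [Module k M] [Module A M] [Module Aᵐᵒᵖ M]
    (T₁ T₂ : M →ₗ[k] A) : Prop :=
  ∀ u v : M, T₁ u * T₂ v + T₂ u * T₁ v =
    T₁ (T₂ u • v + op (T₂ v) • u) + T₂ (T₁ u • v + op (T₁ v) • u)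

/-- The product `u ⋆_T v = T u · v + u · T v` on `M` induced by `T`. -/
def oStar {k A M : Type*} [CommRing k] [Ring A] [Algebra k A]
    [AddCommGroup M] [Module k M] [Module A M] [Module Aᵐᵒᵖ M]
    (T : M →ₗ[k] A) (u v : M) : M :=
  T u • v + op (T v) • u

/-- a compatible `𝒪`-operator `(T₁, T₂)` makes `(M, ⋆₁, ⋆₂)` a compatible
associative algebra. -/
theorem compatible_oOperator_induces_compatible_associative {k A M : Type*} [CommRing k]
    [Ring A] [Algebra k A] [AddCommGroup M] [Module k M] [Module A M] [Module Aᵐᵒᵖ M]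
    [SMulCommClass A Aᵐᵒᵖ M]
    (T₁ T₂ : M →ₗ[k] A) (h₁ : IsOOperator T₁) (h₂ : IsOOperator T₂)
    (hc : OOperatorCompat T₁ T₂) :
    (∀ u v w : M, oStar T₁ (oStar T₁ u v) w = oStar T₁ u (oStar T₁ v w)) ∧
    (∀ u v w : M, oStar T₂ (oStar T₂ u v) w = oStar T₂ u (oStar T₂ v w)) ∧
    (∀ u v w : M,
      oStar T₂ (oStar T₁ u v) w + oStar T₁ (oStar T₂ u v) w =
        oStar T₂ u (oStar T₁ v w) + oStar T₁ u (oStar T₂ v w)) := by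
  have assoc : ∀ (T : M →ₗ[k] A), IsOOperator T →
      ∀ u v w : M, oStar T (oStar T u v) w = oStar T u (oStar T v w) := by
    intro T h u v w
    simp only [oStar]
    rw [← h u v, ← h v w]
    simp only [smul_add, mul_smul, op_mul, smul_comm (T u) (op (T w))]
    abel
  refine ⟨assoc T₁ h₁, assoc T₂ h₂, ?_⟩
  intro u v w
  simp only [oStar, smul_add]
  have e1 : T₂ (T₁ u • v + op (T₁ v) • u) • w + T₁ (T₂ u • v + op (T₂ v) • u) • w
      = (T₁ u * T₂ v) • w + (T₂ u * T₁ v) • w := by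
    rw [← add_smul, ← add_smul, add_comm (T₂ _), ← hc u v]
  have e2 : op (T₂ (T₁ v • w + op (T₁ w) • v)) • u + op (T₁ (T₂ v • w + op (T₂ w) • v)) • u
      = op (T₁ v * T₂ w) • u + op (T₂ v * T₁ w) • u := by
    rw [← add_smul, ← add_smul, ← op_add, ← op_add, add_comm (T₂ _), ← hc v w]
  have g : (T₂ (T₁ u • v + op (T₁ v) • u) • w + T₁ (T₂ u • v + op (T₂ v) • u) • w)
      + (op (T₂ w) • (T₁ u • v) + op (T₂ w) • (op (T₁ v) • u)
        + (op (T₁ w) • (T₂ u • v) + op (T₁ w) • (op (T₂ v) • u)))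
      = (op (T₂ (T₁ v • w + op (T₁ w) • v)) • u + op (T₁ (T₂ v • w + op (T₂ w) • v)) • u)
      + (T₂ u • (T₁ v • w) + T₂ u • (op (T₁ w) • v)
        + (T₁ u • (T₂ v • w) + T₁ u • (op (T₂ w) • v))) := by
    rw [e1, e2]
    simp only [mul_smul, op_mul, smul_comm]
    abel
  linear_combination (norm := abel) g
end

section
/- Let (T₁, T₂) be a compatible O-operator on an A-bimodule M over an associative algebra A. Equip M with the compatible associative products ⋆₁, ⋆₂ where u ⋆ᵢ v = Tᵢ(u)·v + u·Tᵢ(v). Define l_{Tᵢ}(u, a) = Tᵢ(u)·a − Tᵢ(u·a) and r_{Tᵢ}(a, u) = a·Tᵢ(u) − Tᵢ(a·u). Then (A, l_{T₁}, r_{T₁}, l_{T₂}, r_{T₂}) is a compatible bimodule over the compatible associative algebra (M, ⋆₁, ⋆₂). -/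
open MulOpposite

/-- The left action `l_T (u, a) = T u * a - T (u · a)` of `(M, ⋆_T)` on `A`. -/
def oL {k A M : Type*} [CommRing k] [Ring A] [Algebra k A]
    [AddCommGroup M] [Module k M] [Module A M] [Module Aᵐᵒᵖ M]
    (T : M →ₗ[k] A) (u : M) (a : A) : A :=
  T u * a - T (op a • u)

/-- The right action `r_T (a, u) = a * T u - T (a · u)` of `(M, ⋆_T)` on `A`. -/
def oR {k A M : Type*} [CommRing k] [Ring A] [Algebra k A]
    [AddCommGroup M] [Module k M] [Module A M] [Module Aᵐᵒᵖ M]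
    (T : M →ₗ[k] A) (a : A) (u : M) : A :=
  a * T u - T (a • u)


section AuxOOp
set_option linter.unusedSectionVars false
variable {k A M : Type*} [CommRing k] [Ring A] [Algebra k A]
    [AddCommGroup M] [Module k M] [Module A M] [Module Aᵐᵒᵖ M]
    [SMulCommClass A Aᵐᵒᵖ M] (T T₁ T₂ : M →ₗ[k] A)

theorem oOp_aux1 (hT : IsOOperator T) (u v : M) (a : A) :
    oL T (oStar T u v) a = oL T u (oL T v a) := by
  simp only [oL, oStar, mul_sub, sub_mul]
  rw [← hT u v, hT u (op a • v)]
  simp only [smul_add, smul_sub, sub_smul, add_smul, op_sub, op_add, map_add, map_sub,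
    smul_comm (T u) (op a), ← mul_smul, ← op_mul, mul_assoc]
  abel

theorem oOp_aux2 (hT : IsOOperator T) (u v : M) (a : A) :
    oR T (oL T u a) v = oL T u (oR T a v) := by
  simp only [oL, oR, mul_sub, sub_mul]
  rw [hT u (a • v), hT (op a • u) v]
  simp only [smul_add, smul_sub, sub_smul, add_smul, op_sub, op_add, map_add, map_sub,
    smul_comm, ← mul_smul, ← op_mul, mul_assoc]
  abel

theorem oOp_aux3 (hT : IsOOperator T) (u v : M) (a : A) :
    oR T (oR T a u) v = oR T a (oStar T u v) := by
  simp only [oL, oR, oStar, mul_sub, sub_mul, mul_assoc]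
  rw [hT u v, hT (a • u) v]
  simp only [smul_add, smul_sub, sub_smul, add_smul, op_sub, op_add, map_add, map_sub,
    smul_comm, ← mul_smul, ← op_mul, mul_assoc]
  abel

theorem isOOperator_add (h₁ : IsOOperator T₁) (h₂ : IsOOperator T₂)
    (hc : OOperatorCompat T₁ T₂) : IsOOperator (T₁ + T₂) := by
  intro u v
  simp only [LinearMap.add_apply, add_mul, mul_add, add_smul, op_add, map_add]
  have := hc u v
  rw [h₁ u v, h₂ u v] at *
  simp only [map_add] at *
  linear_combination (norm := abel) this

theorem oL_add (u : M) (a : A) : oL (T₁ + T₂) u a = oL T₁ u a + oL T₂ u a := by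
  simp only [oL, LinearMap.add_apply, add_mul]; abel

theorem oR_add (u : M) (a : A) : oR (T₁ + T₂) a u = oR T₁ a u + oR T₂ a u := by
  simp only [oR, LinearMap.add_apply, mul_add]; abel

theorem oStar_add (u v : M) : oStar (T₁ + T₂) u v = oStar T₁ u v + oStar T₂ u v := by
  simp only [oStar, LinearMap.add_apply, add_smul, op_add]; abel

end AuxOOp

/-- for a compatible `𝒪`-operator `(T₁, T₂)`, the quintuple
`(A, l_{T₁}, r_{T₁}, l_{T₂}, r_{T₂})` is a compatible bimodule over the compatible
associative algebra `(M, ⋆₁, ⋆₂)`: `A` is a bimodule over `(M, ⋆ᵢ)` via `(l_{Tᵢ}, r_{Tᵢ})`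
for `i = 1, 2`, and the sum actions form a bimodule over `(M, ⋆₁ + ⋆₂)`. -/

theorem compatible_oOperator_induces_compatible_bimodule {k A M : Type*} [CommRing k]
    [Ring A] [Algebra k A] [AddCommGroup M] [Module k M] [Module A M] [Module Aᵐᵒᵖ M]
    [SMulCommClass A Aᵐᵒᵖ M]
    (T₁ T₂ : M →ₗ[k] A) (h₁ : IsOOperator T₁) (h₂ : IsOOperator T₂)
    (hc : OOperatorCompat T₁ T₂) :
    -- bimodule over (M, ⋆₁) via (l_{T₁}, r_{T₁})
    ((∀ (u v : M) (a : A), oL T₁ (oStar T₁ u v) a = oL T₁ u (oL T₁ v a)) ∧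
     (∀ (u v : M) (a : A), oR T₁ (oL T₁ u a) v = oL T₁ u (oR T₁ a v)) ∧
     (∀ (u v : M) (a : A), oR T₁ (oR T₁ a u) v = oR T₁ a (oStar T₁ u v))) ∧
    -- bimodule over (M, ⋆₂) via (l_{T₂}, r_{T₂})
    ((∀ (u v : M) (a : A), oL T₂ (oStar T₂ u v) a = oL T₂ u (oL T₂ v a)) ∧
     (∀ (u v : M) (a : A), oR T₂ (oL T₂ u a) v = oL T₂ u (oR T₂ a v)) ∧
     (∀ (u v : M) (a : A), oR T₂ (oR T₂ a u) v = oR T₂ a (oStar T₂ u v))) ∧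
    -- the sum actions form a bimodule over (M, ⋆₁ + ⋆₂)
    ((∀ (u v : M) (a : A),
        oL T₁ (oStar T₁ u v + oStar T₂ u v) a + oL T₂ (oStar T₁ u v + oStar T₂ u v) a =
          oL T₁ u (oL T₁ v a + oL T₂ v a) + oL T₂ u (oL T₁ v a + oL T₂ v a)) ∧
     (∀ (u v : M) (a : A),
        oR T₁ (oL T₁ u a + oL T₂ u a) v + oR T₂ (oL T₁ u a + oL T₂ u a) v =
          oL T₁ u (oR T₁ a v + oR T₂ a v) + oL T₂ u (oR T₁ a v + oR T₂ a v)) ∧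
     (∀ (u v : M) (a : A),
        oR T₁ (oR T₁ a u + oR T₂ a u) v + oR T₂ (oR T₁ a u + oR T₂ a u) v =
          oR T₁ a (oStar T₁ u v + oStar T₂ u v) + oR T₂ a (oStar T₁ u v + oStar T₂ u v))) :=
  ⟨⟨oOp_aux1 T₁ h₁, oOp_aux2 T₁ h₁, oOp_aux3 T₁ h₁⟩,
   ⟨oOp_aux1 T₂ h₂, oOp_aux2 T₂ h₂, oOp_aux3 T₂ h₂⟩,
   by
    have h := isOOperator_add T₁ T₂ h₁ h₂ hc
    refine ⟨fun u v a => ?_, fun u v a => ?_, fun u v a => ?_⟩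
    · simpa only [oL_add, oStar_add] using oOp_aux1 (T₁ + T₂) h u v a
    · simpa only [oL_add, oR_add] using oOp_aux2 (T₁ + T₂) h u v a
    · simpa only [oL_add, oR_add, oStar_add] using oOp_aux3 (T₁ + T₂) h u v a⟩
end

section
/- Let A be an associative algebra and let r₁, r₂ ∈ A ⊗ A be a compatible associative Yang-Baxter solution. Define T₁(a) = Σ r₁^{[1]}·a·r₁^{[2]} and T₂(a) = Σ r₂^{[1]}·a·r₂^{[2]}. Then (T₁, T₂) is a compatible Rota-Baxter operator on A, i.e., T₁ and T₂ are Rota-Baxter operators and T₁(a)·T₂(b) + T₂(a)·T₁(b) = T₁(T₂(a)·b + a·T₂(b)) + T₂(T₁(a)·b + a·T₁(b)). -/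
open TensorProduct

variable (k A : Type*)

/-- `r ↦ r¹²`, i.e. `x ⊗ y ↦ x ⊗ y ⊗ 1` into `A ⊗ (A ⊗ A)`. -/
noncomputable def emb12 [CommRing k] [Ring A] [Algebra k A] :
    A ⊗[k] A →ₐ[k] A ⊗[k] (A ⊗[k] A) :=
  Algebra.TensorProduct.map (AlgHom.id k A) Algebra.TensorProduct.includeLeft

/-- `r ↦ r¹³`, i.e. `x ⊗ y ↦ x ⊗ 1 ⊗ y`. -/
noncomputable def emb13 [CommRing k] [Ring A] [Algebra k A] :
    A ⊗[k] A →ₐ[k] A ⊗[k] (A ⊗[k] A) :=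
  Algebra.TensorProduct.map (AlgHom.id k A) Algebra.TensorProduct.includeRight

/-- `r ↦ r²³`, i.e. `x ⊗ y ↦ 1 ⊗ x ⊗ y`. -/
noncomputable def emb23 [CommRing k] [Ring A] [Algebra k A] :
    A ⊗[k] A →ₐ[k] A ⊗[k] (A ⊗[k] A) :=
  Algebra.TensorProduct.includeRight

/-- `r` is an associative Yang-Baxter solution: `r¹³r¹² − r¹²r²³ + r²³r¹³ = 0`. -/
def IsAYBSolution [CommRing k] [Ring A] [Algebra k A] (r : A ⊗[k] A) : Prop :=
  emb13 k A r * emb12 k A r - emb12 k A r * emb23 k A r + emb23 k A r * emb13 k A r = 0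

/-- `(r₁, r₂)` satisfies the compatibility condition:
`r₁¹³r₂¹² + r₂¹³r₁¹² − r₁¹²r₂²³ − r₂¹²r₁²³ + r₁²³r₂¹³ + r₂²³r₁¹³ = 0`. -/
def AYBCompat [CommRing k] [Ring A] [Algebra k A] (r₁ r₂ : A ⊗[k] A) : Prop :=
  emb13 k A r₁ * emb12 k A r₂ + emb13 k A r₂ * emb12 k A r₁
    - emb12 k A r₁ * emb23 k A r₂ - emb12 k A r₂ * emb23 k A r₁
    + emb23 k A r₁ * emb13 k A r₂ + emb23 k A r₂ * emb13 k A r₁ = 0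

/-- The linear map `A → A`, `a ↦ Σ r^{[1]} * a * r^{[2]}` associated to `r ∈ A ⊗ A`. -/
noncomputable def aybToOperator [CommRing k] [Ring A] [Algebra k A] (r : A ⊗[k] A) :
    A →ₗ[k] A :=
  TensorProduct.lift
    (LinearMap.mk₂ k (fun x y => LinearMap.mulLeft k x ∘ₗ LinearMap.mulRight k y)
      (by intro x x' y; ext a; simp [add_mul])
      (by intro c x y; ext a; simp [smul_mul_assoc])
      (by intro x y y'; ext a; simp [mul_add])
      (by intro c x y; ext a; simp [mul_smul_comm])) r

section Aux

variable [CommRing k] [Ring A] [Algebra k A]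

/-- inner evaluation `v ⊗ w ↦ u*a*v*b*w`. -/
noncomputable def phiInner (a b u : A) : A ⊗[k] A →ₗ[k] A :=
  TensorProduct.lift
    (LinearMap.mk₂ k (fun v w => u * a * v * b * w)
      (by intro x x' y; simp [mul_add, add_mul])
      (by intro c x y; simp [mul_smul_comm, smul_mul_assoc])
      (by intro x y y'; simp [mul_add])
      (by intro c x y; simp [mul_smul_comm]))

@[simp] lemma phiInner_tmul (a b u v w : A) :
    phiInner k A a b u (v ⊗ₜ[k] w) = u * a * v * b * w := rfl

/-- `Φ_{a,b} : u ⊗ v ⊗ w ↦ u*a*v*b*w`. -/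
noncomputable def Phi (a b : A) : A ⊗[k] (A ⊗[k] A) →ₗ[k] A :=
  TensorProduct.lift
    { toFun := fun u => phiInner k A a b u
      map_add' := by
        intro u u'; ext v w
        simp [add_mul]
      map_smul' := by
        intro c u; ext v w
        simp [smul_mul_assoc] }

@[simp] lemma Phi_tmul (a b u v w : A) :
    Phi k A a b (u ⊗ₜ[k] (v ⊗ₜ[k] w)) = u * a * v * b * w := rfl

@[simp] lemma aybToOperator_tmul (x y a : A) :
    aybToOperator k A (x ⊗ₜ[k] y) a = x * a * y := by
  simp [aybToOperator, mul_assoc]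

lemma aybToOperator_add (r r' : A ⊗[k] A) (a : A) :
    aybToOperator k A (r + r') a = aybToOperator k A r a + aybToOperator k A r' a := by
  simp [aybToOperator]

lemma Phi_13_12 (a b : A) (r r' : A ⊗[k] A) :
    Phi k A a b (emb13 k A r * emb12 k A r')
      = aybToOperator k A r (aybToOperator k A r' a * b) := by
  induction r using TensorProduct.induction_on with
  | zero => simp [aybToOperator]
  | add s t hs ht =>
      simp only [map_add, add_mul, aybToOperator_add, hs, ht]
  | tmul x y =>
      induction r' using TensorProduct.induction_on with
      | zero => simp [aybToOperator]
      | add s t hs ht => simp only [map_add, mul_add, add_mul, aybToOperator_add, hs, ht]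
      | tmul x' y' =>
          simp [emb12, emb13, Algebra.TensorProduct.tmul_mul_tmul, mul_assoc]

lemma Phi_12_23 (a b : A) (r r' : A ⊗[k] A) :
    Phi k A a b (emb12 k A r * emb23 k A r')
      = aybToOperator k A r a * aybToOperator k A r' b := by
  induction r using TensorProduct.induction_on with
  | zero => simp [aybToOperator]
  | add s t hs ht => simp only [map_add, add_mul, aybToOperator_add, hs, ht]
  | tmul x y =>
      induction r' using TensorProduct.induction_on with
      | zero => simp [aybToOperator]
      | add s t hs ht => simp only [map_add, mul_add, add_mul, aybToOperator_add, hs, ht]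
      | tmul x' y' =>
          simp [emb12, emb23, Algebra.TensorProduct.tmul_mul_tmul, mul_assoc]

lemma Phi_23_13 (a b : A) (r r' : A ⊗[k] A) :
    Phi k A a b (emb23 k A r * emb13 k A r')
      = aybToOperator k A r' (a * aybToOperator k A r b) := by
  induction r using TensorProduct.induction_on with
  | zero => simp [aybToOperator]
  | add s t hs ht => simp only [map_add, add_mul, mul_add, aybToOperator_add, hs, ht]
  | tmul x y =>
      induction r' using TensorProduct.induction_on with
      | zero => simp [aybToOperator]
      | add s t hs ht => simp only [map_add, mul_add, add_mul, aybToOperator_add, hs, ht]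
      | tmul x' y' =>
          simp [emb23, emb13, Algebra.TensorProduct.tmul_mul_tmul, mul_assoc]

lemma ayb_rota (r : A ⊗[k] A) (h : IsAYBSolution k A r) (a b : A) :
    aybToOperator k A r a * aybToOperator k A r b =
      aybToOperator k A r (aybToOperator k A r a * b + a * aybToOperator k A r b) := by
  have := congrArg (Phi k A a b) h
  simp only [map_add, map_sub, map_zero, Phi_13_12, Phi_12_23, Phi_23_13] at this
  rw [map_add]
  have key : aybToOperator k A r (aybToOperator k A r a * b)
      + aybToOperator k A r (a * aybToOperator k A r b)
      - aybToOperator k A r a * aybToOperator k A r b = 0 := by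
    rw [← this]; abel
  exact (sub_eq_zero.mp key).symm

end Aux

/-- a compatible associative Yang-Baxter solution `(r₁, r₂)` gives a
compatible Rota-Baxter operator `(T₁, T₂)` with `Tᵢ a = Σ rᵢ^{[1]} * a * rᵢ^{[2]}`. -/
theorem compatible_ayb_gives_compatible_rota_baxter [CommRing k] [Ring A] [Algebra k A]
    (r₁ r₂ : A ⊗[k] A) (h₁ : IsAYBSolution k A r₁) (h₂ : IsAYBSolution k A r₂)
    (hc : AYBCompat k A r₁ r₂) :
    (∀ a b : A, aybToOperator k A r₁ a * aybToOperator k A r₁ b =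
        aybToOperator k A r₁ (aybToOperator k A r₁ a * b + a * aybToOperator k A r₁ b)) ∧
    (∀ a b : A, aybToOperator k A r₂ a * aybToOperator k A r₂ b =
        aybToOperator k A r₂ (aybToOperator k A r₂ a * b + a * aybToOperator k A r₂ b)) ∧
    (∀ a b : A,
      aybToOperator k A r₁ a * aybToOperator k A r₂ b
          + aybToOperator k A r₂ a * aybToOperator k A r₁ b =
        aybToOperator k A r₁ (aybToOperator k A r₂ a * b + a * aybToOperator k A r₂ b)
          + aybToOperator k A r₂ (aybToOperator k A r₁ a * b + a * aybToOperator k A r₁ b)) := by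
  refine ⟨ayb_rota k A r₁ h₁, ayb_rota k A r₂ h₂, fun a b => ?_⟩
  have := congrArg (Phi k A a b) hc
  simp only [map_add, map_sub, map_zero, Phi_13_12, Phi_12_23, Phi_23_13] at this
  rw [map_add, map_add]
  have key : aybToOperator k A r₁ (aybToOperator k A r₂ a * b)
      + aybToOperator k A r₁ (a * aybToOperator k A r₂ b)
      + (aybToOperator k A r₂ (aybToOperator k A r₁ a * b)
        + aybToOperator k A r₂ (a * aybToOperator k A r₁ b))
      - (aybToOperator k A r₁ a * aybToOperator k A r₂ b
        + aybToOperator k A r₂ a * aybToOperator k A r₁ b) = 0 := by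
    rw [← this]; abel
  exact (sub_eq_zero.mp key).symm
end

section
/- Let (g, [·,·]) be a graded Lie algebra concentrated in nonnegative degrees. Define g_c by (g_c)⁰ = g⁰ and (g_c)ⁿ = (gⁿ)^{n+1} (direct sum of n+1 copies of gⁿ) with bracket ⟦(x₁,…,x_{m+1}), (y₁,…,y_{n+1})⟧ whose i-th component (in degree m+n) is Σ_{j+k=i+1} [x_j, y_k]. Then (g_c, ⟦·,·⟧) is a graded Lie algebra (graded antisymmetry and graded Jacobi identity hold). -/
/-- Transport of a homogeneous element along an equality of degrees. -/
def gcast {g : ℕ → Type*} {m n : ℕ} (h : m = n) (x : g m) : g n := h ▸ x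

/-- The bracket on `g_c`: the degree-`m` part of `g_c` is `(g m)^{m+1}`, and the `i`-th
component (0-indexed) of `⟦x, y⟧` is `∑_{j+l=i} [x_j, y_l]`. -/
def gcBracket {g : ℕ → Type*} [∀ n, AddCommGroup (g n)]
    (br : ∀ m n : ℕ, g m → g n → g (m + n)) {m n : ℕ}
    (x : Fin (m + 1) → g m) (y : Fin (n + 1) → g n) :
    Fin (m + n + 1) → g (m + n) :=
  fun i => ∑ j : Fin (m + 1), ∑ l : Fin (n + 1),
    if (j : ℕ) + (l : ℕ) = (i : ℕ) then br m n (x j) (y l) else 0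

theorem gcast_zero {g : ℕ → Type*} [∀ n, AddCommGroup (g n)] {a b : ℕ} (h : a = b) :
    gcast h (0 : g a) = 0 := by subst h; rfl

theorem gcast_smul {g : ℕ → Type*} [∀ n, AddCommGroup (g n)] {a b : ℕ} (h : a = b)
    (c : ℤ) (x : g a) : gcast h (c • x) = c • gcast h x := by subst h; rfl

theorem gcast_sum {g : ℕ → Type*} [∀ n, AddCommGroup (g n)] {a b : ℕ} (h : a = b)
    {ι : Type*} (s : Finset ι) (f : ι → g a) :
    gcast h (∑ i ∈ s, f i) = ∑ i ∈ s, gcast h (f i) := by subst h; rfl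

theorem gcast_ite {g : ℕ → Type*} [∀ n, AddCommGroup (g n)] {a b : ℕ} (h : a = b)
    (P : Prop) [Decidable P] (x y : g a) :
    gcast h (if P then x else y) = if P then gcast h x else gcast h y := by subst h; rfl

theorem sum3_comm {M : Type*} [AddCommMonoid M] {α β γ : Type*}
    [Fintype α] [Fintype β] [Fintype γ] (f : α → β → γ → M) :
    ∑ a, ∑ b, ∑ c, f a b c = ∑ c, ∑ a, ∑ b, f a b c := by
  have h : ∀ a, ∑ b, ∑ c, f a b c = ∑ c, ∑ b, f a b c := fun a => Finset.sum_comm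
  simp_rw [h]; exact Finset.sum_comm

theorem gcBracket_comp {g : ℕ → Type*} [∀ n, AddCommGroup (g n)]
    (br : ∀ m n : ℕ, g m → g n → g (m + n))
    (hadd_r : ∀ (m n : ℕ) (x : g m) (y z : g n),
      br m n x (y + z) = br m n x y + br m n x z)
    (m n p : ℕ) (x : Fin (m + 1) → g m) (y : Fin (n + 1) → g n) (z : Fin (p + 1) → g p)
    (i : Fin (m + (n + p) + 1)) :
    gcBracket br x (gcBracket br y z) i =
      ∑ j : Fin (m + 1), ∑ a : Fin (n + 1), ∑ b : Fin (p + 1),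
        if (j : ℕ) + (a : ℕ) + (b : ℕ) = (i : ℕ)
          then br m (n + p) (x j) (br n p (y a) (z b)) else 0 := by
  have br0 : ∀ (m n : ℕ) (x : g m), br m n x 0 = 0 := by
    intro m n x
    have h := hadd_r m n x 0 0
    rw [add_zero] at h
    exact left_eq_add.mp h
  have brsum : ∀ (m n k : ℕ) (x : g m) (s : Finset (Fin k)) (f : Fin k → g n),
      br m n x (∑ i ∈ s, f i) = ∑ i ∈ s, br m n x (f i) := by
    intro m n k x s f
    classical
    induction s using Finset.cons_induction with
    | empty => simpa using br0 m n x
    | cons a s ha ih => rw [Finset.sum_cons, hadd_r, ih, Finset.sum_cons]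
  unfold gcBracket
  refine Finset.sum_congr rfl fun j _ => ?_
  have step1 : ∀ l : Fin (n + p + 1),
      (if (j : ℕ) + (l : ℕ) = (i : ℕ)
        then br m (n + p) (x j)
          (∑ a : Fin (n + 1), ∑ b : Fin (p + 1),
            if (a : ℕ) + (b : ℕ) = (l : ℕ) then br n p (y a) (z b) else 0)
        else 0) =
      ∑ a : Fin (n + 1), ∑ b : Fin (p + 1),
        if ((j : ℕ) + (l : ℕ) = (i : ℕ)) ∧ ((a : ℕ) + (b : ℕ) = (l : ℕ))
          then br m (n + p) (x j) (br n p (y a) (z b)) else 0 := by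
    intro l
    by_cases hc : (j : ℕ) + (l : ℕ) = (i : ℕ)
    · rw [if_pos hc, brsum]
      refine Finset.sum_congr rfl fun a _ => ?_
      rw [brsum]
      refine Finset.sum_congr rfl fun b _ => ?_
      by_cases hc2 : (a : ℕ) + (b : ℕ) = (l : ℕ)
      · rw [if_pos hc2, if_pos ⟨hc, hc2⟩]
      · rw [if_neg hc2, if_neg (by tauto), br0]
    · rw [if_neg hc]
      symm
      refine Finset.sum_eq_zero fun a _ => Finset.sum_eq_zero fun b _ => ?_
      rw [if_neg (by tauto)]
  rw [Finset.sum_congr rfl fun l _ => step1 l]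
  rw [(sum3_comm fun (a : Fin (n + 1)) (b : Fin (p + 1)) (l : Fin (n + p + 1)) =>
    if ((j : ℕ) + (l : ℕ) = (i : ℕ)) ∧ ((a : ℕ) + (b : ℕ) = (l : ℕ))
      then br m (n + p) (x j) (br n p (y a) (z b)) else 0).symm]
  refine Finset.sum_congr rfl fun a _ => Finset.sum_congr rfl fun b _ => ?_
  rw [Fintype.sum_eq_single (⟨(a : ℕ) + (b : ℕ), by omega⟩ : Fin (n + p + 1))
    (fun l hl => if_neg (fun hh =>
      hl (Fin.ext (show (l : ℕ) = (a : ℕ) + (b : ℕ) by omega))))]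
  by_cases hc : (j : ℕ) + (a : ℕ) + (b : ℕ) = (i : ℕ)
  · rw [if_pos hc,
      if_pos (⟨show (j : ℕ) + ((a : ℕ) + (b : ℕ)) = (i : ℕ) by omega, rfl⟩ :
        ((j : ℕ) + ((a : ℕ) + (b : ℕ)) = (i : ℕ)) ∧ ((a : ℕ) + (b : ℕ) = (a : ℕ) + (b : ℕ)))]
  · rw [if_neg hc,
      if_neg (show ¬(((j : ℕ) + ((a : ℕ) + (b : ℕ)) = (i : ℕ)) ∧
        ((a : ℕ) + (b : ℕ) = (a : ℕ) + (b : ℕ))) by omega)]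

/-- if `(g, [·,·])` is a graded Lie algebra (concentrated in nonnegative
degrees), then `(g_c, ⟦·,·⟧)` is again a graded Lie algebra: the bracket `⟦·,·⟧` satisfies
graded antisymmetry and the graded Jacobi identity. -/
theorem gc_is_graded_lie {g : ℕ → Type*} [∀ n, AddCommGroup (g n)]
    (br : ∀ m n : ℕ, g m → g n → g (m + n))
    (hadd_l : ∀ (m n : ℕ) (x y : g m) (z : g n),
      br m n (x + y) z = br m n x z + br m n y z)
    (hadd_r : ∀ (m n : ℕ) (x : g m) (y z : g n),
      br m n x (y + z) = br m n x y + br m n x z)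
    (hanti : ∀ (m n : ℕ) (x : g m) (y : g n),
      br m n x y = -((-1 : ℤ) ^ (m * n) • gcast (Nat.add_comm n m) (br n m y x)))
    (hjac : ∀ (m n p : ℕ) (x : g m) (y : g n) (z : g p),
      (-1 : ℤ) ^ (m * p) • gcast (by omega : m + (n + p) = m + n + p)
          (br m (n + p) x (br n p y z))
        + (-1 : ℤ) ^ (n * m) • gcast (by omega : n + (p + m) = m + n + p)
          (br n (p + m) y (br p m z x))
        + (-1 : ℤ) ^ (p * n) • gcast (by omega : p + (m + n) = m + n + p)
          (br p (m + n) z (br m n x y)) = 0) :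
    -- graded antisymmetry of ⟦·,·⟧
    (∀ (m n : ℕ) (x : Fin (m + 1) → g m) (y : Fin (n + 1) → g n) (i : Fin (m + n + 1)),
      gcBracket br x y i =
        -((-1 : ℤ) ^ (m * n) • gcast (Nat.add_comm n m)
          (gcBracket br y x ⟨(i : ℕ), by omega⟩))) ∧
    -- graded Jacobi identity of ⟦·,·⟧
    (∀ (m n p : ℕ) (x : Fin (m + 1) → g m) (y : Fin (n + 1) → g n) (z : Fin (p + 1) → g p)
        (i : Fin (m + n + p + 1)),
      (-1 : ℤ) ^ (m * p) • gcast (by omega : m + (n + p) = m + n + p)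
          (gcBracket br x (gcBracket br y z) ⟨(i : ℕ), by omega⟩)
        + (-1 : ℤ) ^ (n * m) • gcast (by omega : n + (p + m) = m + n + p)
          (gcBracket br y (gcBracket br z x) ⟨(i : ℕ), by omega⟩)
        + (-1 : ℤ) ^ (p * n) • gcast (by omega : p + (m + n) = m + n + p)
          (gcBracket br z (gcBracket br x y) ⟨(i : ℕ), by omega⟩) = 0) := by
  constructor
  · intro m n x y i
    rw [eq_neg_iff_add_eq_zero]
    unfold gcBracket
    simp only [gcast_sum, gcast_ite, gcast_zero, Finset.smul_sum, smul_ite, smul_zero,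
      Fin.val_mk]
    nth_rewrite 2 [Finset.sum_comm]
    rw [← Finset.sum_add_distrib]
    refine Finset.sum_eq_zero fun j _ => ?_
    rw [← Finset.sum_add_distrib]
    refine Finset.sum_eq_zero fun l _ => ?_
    by_cases hc : (j : ℕ) + (l : ℕ) = (i : ℕ)
    · rw [if_pos hc, if_pos (show (l : ℕ) + (j : ℕ) = (i : ℕ) by omega),
        hanti m n (x j) (y l)]
      exact neg_add_cancel _
    · rw [if_neg hc, if_neg (show ¬((l : ℕ) + (j : ℕ) = (i : ℕ)) by omega), add_zero]
  · intro m n p x y z i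
    rw [gcBracket_comp br hadd_r, gcBracket_comp br hadd_r, gcBracket_comp br hadd_r]
    simp only [gcast_sum, gcast_ite, gcast_zero, Finset.smul_sum, smul_ite, smul_zero,
      Fin.val_mk]
    nth_rewrite 2 [sum3_comm]
    nth_rewrite 3 [sum3_comm]
    nth_rewrite 3 [sum3_comm]
    rw [← Finset.sum_add_distrib, ← Finset.sum_add_distrib]
    refine Finset.sum_eq_zero fun j _ => ?_
    rw [← Finset.sum_add_distrib, ← Finset.sum_add_distrib]
    refine Finset.sum_eq_zero fun a _ => ?_
    rw [← Finset.sum_add_distrib, ← Finset.sum_add_distrib]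
    refine Finset.sum_eq_zero fun b _ => ?_
    by_cases hc : (j : ℕ) + (a : ℕ) + (b : ℕ) = (i : ℕ)
    · rw [if_pos hc, if_pos (show (a : ℕ) + (b : ℕ) + (j : ℕ) = (i : ℕ) by omega),
        if_pos (show (b : ℕ) + (j : ℕ) + (a : ℕ) = (i : ℕ) by omega)]
      exact hjac m n p (x j) (y a) (z b)
    · rw [if_neg hc, if_neg (show ¬((a : ℕ) + (b : ℕ) + (j : ℕ) = (i : ℕ)) by omega),
        if_neg (show ¬((b : ℕ) + (j : ℕ) + (a : ℕ) = (i : ℕ)) by omega)]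
      simp
end

section
/- Let (D, ≺₁, ≻₁, ≺₂, ≻₂) be a quintuple where (D,≺₁,≻₁) and (D,≺₂,≻₂) are dendriform algebras. Then the three compatibility conditions hold if and only if for all scalars λ, η, the pair (λ≺₁ + η≺₂, λ≻₁ + η≻₂) is a dendriform algebra structure on D. -/
/-- Dendriform algebra axioms for a pair `(≺, ≻)` of operations. -/
def IsDendriform {D : Type*} [AddCommMonoid D] (p s : D → D → D) : Prop :=
  (∀ x y z : D, p (p x y) z = p x (p y z + s y z)) ∧
  (∀ x y z : D, p (s x y) z = s x (p y z)) ∧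
  (∀ x y z : D, s (p x y + s x y) z = s x (s y z))

/-- Compatibility conditions for a pair of dendriform structures. -/
def DendCompat {D : Type*} [AddCommMonoid D] (p₁ s₁ p₂ s₂ : D → D → D) : Prop :=
  (∀ x y z : D, p₂ (p₁ x y) z + p₁ (p₂ x y) z =
    p₂ x (p₁ y z + s₁ y z) + p₁ x (p₂ y z + s₂ y z)) ∧
  (∀ x y z : D, p₂ (s₁ x y) z + p₁ (s₂ x y) z = s₂ x (p₁ y z) + s₁ x (p₂ y z)) ∧
  (∀ x y z : D, s₂ (p₁ x y + s₁ x y) z + s₁ (p₂ x y + s₂ x y) z =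
    s₂ x (s₁ y z) + s₁ x (s₂ y z))

/-- given two dendriform structures `(≺₁,≻₁)` and `(≺₂,≻₂)` (as bilinear
operations) on `D`, the three compatibility conditions hold iff every linear combination
`(λ≺₁ + η≺₂, λ≻₁ + η≻₂)` is a dendriform structure. -/
theorem dendCompat_iff_all_linear_combinations_dendriform {k D : Type*} [CommRing k]
    [AddCommGroup D] [Module k D]
    (p₁ s₁ p₂ s₂ : D →ₗ[k] D →ₗ[k] D)
    (h₁ : IsDendriform (fun x y => p₁ x y) (fun x y => s₁ x y))
    (h₂ : IsDendriform (fun x y => p₂ x y) (fun x y => s₂ x y)) :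
    DendCompat (fun x y => p₁ x y) (fun x y => s₁ x y)
        (fun x y => p₂ x y) (fun x y => s₂ x y) ↔
      ∀ lam eta : k,
        IsDendriform (fun x y => lam • p₁ x y + eta • p₂ x y)
          (fun x y => lam • s₁ x y + eta • s₂ x y) := by
  obtain ⟨h₁a, h₁b, h₁c⟩ := h₁
  obtain ⟨h₂a, h₂b, h₂c⟩ := h₂
  have h₁a' : ∀ x y z : D, p₁ (p₁ x y) z = p₁ x (p₁ y z) + p₁ x (s₁ y z) :=
    fun x y z => by simpa [map_add] using h₁a x y z
  have h₁b' : ∀ x y z : D, p₁ (s₁ x y) z = s₁ x (p₁ y z) :=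
    fun x y z => by simpa using h₁b x y z
  have h₁c' : ∀ x y z : D, s₁ (p₁ x y) z + s₁ (s₁ x y) z = s₁ x (s₁ y z) :=
    fun x y z => by simpa [map_add, LinearMap.add_apply] using h₁c x y z
  have h₂a' : ∀ x y z : D, p₂ (p₂ x y) z = p₂ x (p₂ y z) + p₂ x (s₂ y z) :=
    fun x y z => by simpa [map_add] using h₂a x y z
  have h₂b' : ∀ x y z : D, p₂ (s₂ x y) z = s₂ x (p₂ y z) :=
    fun x y z => by simpa using h₂b x y z
  have h₂c' : ∀ x y z : D, s₂ (p₂ x y) z + s₂ (s₂ x y) z = s₂ x (s₂ y z) :=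
    fun x y z => by simpa [map_add, LinearMap.add_apply] using h₂c x y z
  constructor
  · rintro ⟨hca, hcb, hcc⟩ lam eta
    have hca' : ∀ x y z : D, p₂ (p₁ x y) z + p₁ (p₂ x y) z =
        p₂ x (p₁ y z) + p₂ x (s₁ y z) + (p₁ x (p₂ y z) + p₁ x (s₂ y z)) :=
      fun x y z => by simpa [map_add] using hca x y z
    have hcb' : ∀ x y z : D, p₂ (s₁ x y) z + p₁ (s₂ x y) z =
        s₂ x (p₁ y z) + s₁ x (p₂ y z) :=
      fun x y z => by simpa using hcb x y z
    have hcc' : ∀ x y z : D, s₂ (p₁ x y) z + s₂ (s₁ x y) z +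
        (s₁ (p₂ x y) z + s₁ (s₂ x y) z) = s₂ x (s₁ y z) + s₁ x (s₂ y z) :=
      fun x y z => by simpa [map_add, LinearMap.add_apply] using hcc x y z
    refine ⟨fun x y z => ?_, fun x y z => ?_, fun x y z => ?_⟩
    · simp only [map_add, map_smul, LinearMap.add_apply, LinearMap.smul_apply, smul_add]
      linear_combination (norm := module) (lam*lam) • h₁a' x y z +
        (lam*eta) • hca' x y z + (eta*eta) • h₂a' x y z
    · simp only [map_add, map_smul, LinearMap.add_apply, LinearMap.smul_apply, smul_add]
      linear_combination (norm := module) (lam*lam) • h₁b' x y z +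
        (lam*eta) • hcb' x y z + (eta*eta) • h₂b' x y z
    · simp only [map_add, map_smul, LinearMap.add_apply, LinearMap.smul_apply, smul_add]
      linear_combination (norm := module) (lam*lam) • h₁c' x y z +
        (lam*eta) • hcc' x y z + (eta*eta) • h₂c' x y z
  · intro h
    obtain ⟨H1, H2, H3⟩ := h 1 1
    simp only [one_smul, map_add, LinearMap.add_apply] at H1 H2 H3
    refine ⟨fun x y z => ?_, fun x y z => ?_, fun x y z => ?_⟩
    · simp only [map_add, LinearMap.add_apply]
      linear_combination (norm := module) H1 x y z - h₁a' x y z - h₂a' x y z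
    · simp only [map_add, LinearMap.add_apply]
      linear_combination (norm := module) H2 x y z - h₁b' x y z - h₂b' x y z
    · simp only [map_add, LinearMap.add_apply]
      linear_combination (norm := module) H3 x y z - h₁c' x y z - h₂c' x y z
end

section
/- Let (D, ≺₁, ≻₁, ≺₂, ≻₂) be a compatible dendriform algebra. Define x ◇₁ y = x ≻₁ y − y ≺₁ x and x ◇₂ y = x ≻₂ y − y ≺₂ x. Then (D, ◇₁, ◇₂) is a compatible pre-Lie algebra: each ◇ᵢ is a left pre-Lie product, and (x◇₁y)◇₂z + (x◇₂y)◇₁z − x◇₂(y◇₁z) − x◇₁(y◇₂z) = (y◇₁x)◇₂z + (y◇₂x)◇₁z − y◇₂(x◇₁z) − y◇₁(x◇₂z). -/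
/-- An operation is additive in both arguments. -/
def Biadditive {D : Type*} [AddCommMonoid D] (f : D → D → D) : Prop :=
  (∀ x y z : D, f (x + y) z = f x z + f y z) ∧ (∀ x y z : D, f x (y + z) = f x y + f x z)

/-- The left pre-Lie identity. -/
def IsPreLie {D : Type*} [AddCommGroup D] (d : D → D → D) : Prop :=
  ∀ x y z : D, d (d x y) z - d x (d y z) = d (d y x) z - d y (d x z)

theorem Biadd.subl {D : Type*} [AddCommGroup D] {f : D → D → D} (h : Biadditive f) :
    ∀ x y z : D, f (x - y) z = f x z - f y z := by
  intro x y z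
  have := h.1 (x - y) y z
  rw [sub_add_cancel] at this
  rw [this]; abel

theorem Biadd.subr {D : Type*} [AddCommGroup D] {f : D → D → D} (h : Biadditive f) :
    ∀ x y z : D, f x (y - z) = f x y - f x z := by
  intro x y z
  have := h.2 x (y - z) z
  rw [sub_add_cancel] at this
  rw [this]; abel

theorem preLie_of_dendriform {D : Type*} [AddCommGroup D] (p s : D → D → D)
    (hp : Biadditive p) (hs : Biadditive s) (h : IsDendriform p s) :
    IsPreLie (fun x y => s x y - p y x) := by
  intro x y z
  simp only
  simp only [Biadd.subl hp, Biadd.subr hp, Biadd.subl hs, Biadd.subr hs]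
  have e1 : s x (s y z) = s (p x y) z + s (s x y) z := by
    rw [← h.2.2, hs.1]
  have e2 : s y (s x z) = s (p y x) z + s (s y x) z := by
    rw [← h.2.2, hs.1]
  have e3 : p (s y z) x = s y (p z x) := h.2.1 y z x
  have e4 : p (s x z) y = s x (p z y) := h.2.1 x z y
  have e5 : p (p z y) x = p z (p y x) + p z (s y x) := by
    rw [h.1, hp.2]
  have e6 : p (p z x) y = p z (p x y) + p z (s x y) := by
    rw [h.1, hp.2]
  rw [e1, e2, e3, e4, e5, e6]
  abel

/-- a compatible dendriform algebra gives a compatible pre-Lie algebra via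
`x ◇ᵢ y = x ≻ᵢ y − y ≺ᵢ x`. -/
theorem compatible_dendriform_gives_compatible_preLie {D : Type*} [AddCommGroup D]
    (p₁ s₁ p₂ s₂ : D → D → D)
    (hp₁ : Biadditive p₁) (hs₁ : Biadditive s₁) (hp₂ : Biadditive p₂) (hs₂ : Biadditive s₂)
    (h₁ : IsDendriform p₁ s₁) (h₂ : IsDendriform p₂ s₂)
    (hc : DendCompat p₁ s₁ p₂ s₂) :
    IsPreLie (fun x y => s₁ x y - p₁ y x) ∧
    IsPreLie (fun x y => s₂ x y - p₂ y x) ∧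
    (∀ x y z : D,
      (fun x y => s₂ x y - p₂ y x) ((fun x y => s₁ x y - p₁ y x) x y) z
        + (fun x y => s₁ x y - p₁ y x) ((fun x y => s₂ x y - p₂ y x) x y) z
        - (fun x y => s₂ x y - p₂ y x) x ((fun x y => s₁ x y - p₁ y x) y z)
        - (fun x y => s₁ x y - p₁ y x) x ((fun x y => s₂ x y - p₂ y x) y z) =
      (fun x y => s₂ x y - p₂ y x) ((fun x y => s₁ x y - p₁ y x) y x) z
        + (fun x y => s₁ x y - p₁ y x) ((fun x y => s₂ x y - p₂ y x) y x) z
        - (fun x y => s₂ x y - p₂ y x) y ((fun x y => s₁ x y - p₁ y x) x z)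
        - (fun x y => s₁ x y - p₁ y x) y ((fun x y => s₂ x y - p₂ y x) x z)) := by
  refine ⟨preLie_of_dendriform p₁ s₁ hp₁ hs₁ h₁, preLie_of_dendriform p₂ s₂ hp₂ hs₂ h₂, ?_⟩
  intro x y z
  simp only
  simp only [Biadd.subl hp₁, Biadd.subr hp₁, Biadd.subl hs₁, Biadd.subr hs₁,
    Biadd.subl hp₂, Biadd.subr hp₂, Biadd.subl hs₂, Biadd.subr hs₂]
  have h3 := hc.2.2 x y z
  rw [hs₂.1, hs₁.1] at h3
  have e7 := eq_sub_of_add_eq h3.symm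
  have h3' := hc.2.2 y x z
  rw [hs₂.1, hs₁.1] at h3'
  have e7' := eq_sub_of_add_eq h3'.symm
  have e8 := eq_sub_of_add_eq (hc.2.1 y z x)
  have e8' := eq_sub_of_add_eq (hc.2.1 x z y)
  have h9 := hc.1 z y x
  rw [hp₂.2, hp₁.2] at h9
  have e9 := eq_sub_of_add_eq h9
  have h9' := hc.1 z x y
  rw [hp₂.2, hp₁.2] at h9'
  have e9' := eq_sub_of_add_eq h9'
  rw [e7, e7', e8, e8', e9, e9']
  abel
end

section
/- Let A be an associative algebra, M an A-bimodule, and (T₁, T₂) a compatible O-operator. Define u ≺_{Tᵢ} v = u·Tᵢ(v) and u ≻_{Tᵢ} v = Tᵢ(u)·v. Then (M, ≺_{T₁}, ≻_{T₁}, ≺_{T₂}, ≻_{T₂}) is a compatible dendriform algebra. -/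
open MulOpposite

/-- a compatible `𝒪`-operator `(T₁, T₂)` induces a compatible dendriform
algebra structure on `M` via `u ≺_{Tᵢ} v = u · Tᵢ v` and `u ≻_{Tᵢ} v = Tᵢ u · v`. -/
theorem compatible_oOperator_induces_compatible_dendriform {k A M : Type*} [CommRing k]
    [Ring A] [Algebra k A] [AddCommGroup M] [Module k M] [Module A M] [Module Aᵐᵒᵖ M]
    [SMulCommClass A Aᵐᵒᵖ M]
    (T₁ T₂ : M →ₗ[k] A) (h₁ : IsOOperator T₁) (h₂ : IsOOperator T₂)
    (hc : OOperatorCompat T₁ T₂) :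
    IsDendriform (fun u v : M => op (T₁ v) • u) (fun u v : M => T₁ u • v) ∧
    IsDendriform (fun u v : M => op (T₂ v) • u) (fun u v : M => T₂ u • v) ∧
    DendCompat (fun u v : M => op (T₁ v) • u) (fun u v : M => T₁ u • v)
      (fun u v : M => op (T₂ v) • u) (fun u v : M => T₂ u • v) := by
  have key : ∀ (T : M →ₗ[k] A), IsOOperator T →
      IsDendriform (fun u v : M => op (T v) • u) (fun u v : M => T u • v) := by
    intro T h
    refine ⟨?_, ?_, ?_⟩ <;> intro x y z <;> simp only
    · rw [smul_smul, ← op_mul, h y z, add_comm]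
    · rw [smul_comm (T x) (op (T z)) y]
    · rw [add_comm (op (T y) • x), ← h x y, mul_smul]
  refine ⟨key T₁ h₁, key T₂ h₂, ?_, ?_, ?_⟩ <;> intro x y z <;> simp only
  · rw [smul_smul, smul_smul, ← op_mul, ← op_mul, ← add_smul, ← op_add, hc y z]
    simp only [map_add, op_add, add_smul]
    abel
  · rw [smul_comm (T₂ x) (op (T₁ z)) y, smul_comm (T₁ x) (op (T₂ z)) y, add_comm]
  · rw [← add_smul, add_comm (op (T₁ y) • x), add_comm (op (T₂ y) • x),
      add_comm (T₂ (T₁ x • y + op (T₁ y) • x)), ← hc x y,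
      add_smul, mul_smul, mul_smul, add_comm]
end
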